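/- For the two-agent mixed-manna instance built from positive integers e_1,...,e_m (goods with values e_j and two chores of value −(Σ_i e_i)/2 + 1/4 each, with Σ_i e_i even), the maximin share MMS over 2 bundles satisfies 0 ≤ MMS ≤ 1/4, and MMS > 0 if and only if the Partition instance {e_1,...,e_m} has a solution; moreover when a solution exists MMS = 1/4. -/

import Mathlib

open Finset
open scoped Classical

/-- `A` is a partition of the item set `M` into `n` (possibly empty) bundles. -/
def IsPartition {ι : Type*} [DecidableEq ι] (M : Finset ι) (n : ℕ)
    (A : Fin n → Finset ι) : Prop :=
  (∀ k, A k ⊆ M) ∧ (∀ k l, k ≠ l → Disjoint (A k) (A l)) ∧ (∀ j ∈ M, ∃ k, j ∈ A k)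

/-- `μ` is the maximin share of the additive valuation `v` over `M` with `n` bundles:
some partition attains minimum bundle value at least `μ`, and every partition has a
bundle of value at most `μ`. -/
def IsMMS {ι : Type*} [DecidableEq ι] (v : ι → ℝ) (M : Finset ι) (n : ℕ) (μ : ℝ) : Prop :=
  (∃ A : Fin n → Finset ι, IsPartition M n A ∧ ∀ k, μ ≤ ∑ j ∈ A k, v j) ∧
  (∀ A : Fin n → Finset ι, IsPartition M n A → ∃ k, ∑ j ∈ A k, v j ≤ μ)

namespace MMSAux

variable (m : ℕ) (e : Fin m → ℕ)

noncomputable def v : Fin (m + 2) → ℝ := fun j =>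
  if h : (j : ℕ) < m then (e ⟨j, h⟩ : ℝ)
  else -((∑ i, e i : ℕ) : ℝ) / 2 + 1 / 4

def fg : Fin m → Fin (m + 2) := Fin.castLE (by omega)

def c0 : Fin (m + 2) := ⟨m, by omega⟩
def c1 : Fin (m + 2) := ⟨m + 1, by omega⟩

lemma fg_inj : Function.Injective (fg m) := fun a b h => by
  simpa [fg, Fin.ext_iff] using h

lemma fg_val (i : Fin m) : ((fg m i : Fin (m+2)) : ℕ) = (i : ℕ) := rfl

lemma fg_ne_c0 (i : Fin m) : fg m i ≠ c0 m := by
  intro h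
  have := congrArg Fin.val h
  rw [fg_val] at this
  exact absurd this (by have := i.isLt; simp [c0]; omega)

lemma fg_ne_c1 (i : Fin m) : fg m i ≠ c1 m := by
  intro h
  have := congrArg Fin.val h
  rw [fg_val] at this
  exact absurd this (by have := i.isLt; simp [c1]; omega)

lemma v_fg (i : Fin m) : v m e (fg m i) = e i := by
  simp [v, fg]

lemma v_c0 : v m e (c0 m) = -((∑ i, e i : ℕ) : ℝ) / 2 + 1 / 4 := by
  simp [v, c0]

lemma v_c1 : v m e (c1 m) = -((∑ i, e i : ℕ) : ℝ) / 2 + 1 / 4 := by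
  simp [v, c1]

lemma c0_ne_c1 : c0 m ≠ c1 m := by simp [c0, c1, Fin.ext_iff]

lemma decomp (B : Finset (Fin (m + 2))) :
    ∑ j ∈ B, v m e j =
      (∑ i ∈ univ.filter (fun i => fg m i ∈ B), (e i : ℝ))
      + (if c0 m ∈ B then -((∑ i, e i : ℕ) : ℝ) / 2 + 1 / 4 else 0)
      + (if c1 m ∈ B then -((∑ i, e i : ℕ) : ℝ) / 2 + 1 / 4 else 0) := by
  classical
  have h1 : B.filter (fun j : Fin (m+2) => (j : ℕ) < m)
      = (univ.filter (fun i => fg m i ∈ B)).image (fg m) := by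
    ext j
    simp only [mem_filter, mem_image, mem_univ, true_and]
    constructor
    · rintro ⟨hjB, hj⟩
      exact ⟨⟨j, hj⟩, by simpa [fg, Fin.ext_iff] using hjB, by simp [fg, Fin.ext_iff]⟩
    · rintro ⟨i, hi, rfl⟩
      exact ⟨hi, by simpa [fg_val] using i.isLt⟩
  have h2 : B.filter (fun j : Fin (m+2) => ¬ (j : ℕ) < m)
      = ({c0 m, c1 m} : Finset (Fin (m+2))).filter (· ∈ B) := by
    ext j
    simp only [mem_filter, mem_insert, mem_singleton]
    constructor
    · rintro ⟨hjB, hj⟩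
      have hlt := j.isLt
      rcases (by omega : (j : ℕ) = m ∨ (j : ℕ) = m + 1) with h | h
      · exact ⟨Or.inl (Fin.ext h), hjB⟩
      · exact ⟨Or.inr (Fin.ext h), hjB⟩
    · rintro ⟨h, hjB⟩
      refine ⟨hjB, ?_⟩
      rcases h with rfl | rfl <;> simp [c0, c1]
  have h3 : ∑ x ∈ ({c0 m, c1 m} : Finset (Fin (m+2))).filter (· ∈ B), v m e x
      = (if c0 m ∈ B then -((∑ i, e i : ℕ) : ℝ) / 2 + 1 / 4 else 0)
        + (if c1 m ∈ B then -((∑ i, e i : ℕ) : ℝ) / 2 + 1 / 4 else 0) := by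
    rw [Finset.sum_filter,
      Finset.sum_insert (by simp [c0_ne_c1 m] : c0 m ∉ ({c1 m} : Finset (Fin (m+2)))),
      Finset.sum_singleton, v_c0, v_c1]
  rw [← Finset.sum_filter_add_sum_filter_not B (fun j : Fin (m+2) => (j : ℕ) < m), h1, h2,
    Finset.sum_image (fun a _ b _ h => fg_inj m h), h3]
  simp only [v_fg]
  ring

lemma total : ∑ j, v m e j = 1 / 2 := by
  have h := decomp m e univ
  simp only [mem_univ, if_true, filter_true] at h
  rw [h]
  push_cast
  ring

end MMSAux

theorem mms_iff_partition (m : ℕ) (e : Fin m → ℕ)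
    (hpos : ∀ i, 0 < e i) (heven : 2 ∣ ∑ i, e i)
    (μ : ℝ)
    (hMMS : IsMMS
      (fun j : Fin (m + 2) =>
        if h : (j : ℕ) < m then (e ⟨j, h⟩ : ℝ)
        else -((∑ i, e i : ℕ) : ℝ) / 2 + 1 / 4)
      Finset.univ 2 μ) :
    0 ≤ μ ∧ μ ≤ 1 / 4 ∧
    (0 < μ ↔ ∃ S : Finset (Fin m), 2 * ∑ i ∈ S, e i = ∑ i, e i) ∧
    ((∃ S : Finset (Fin m), 2 * ∑ i ∈ S, e i = ∑ i, e i) → μ = 1 / 4) := by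
  classical
  have hMMS' : IsMMS (MMSAux.v m e) Finset.univ 2 μ := hMMS
  obtain ⟨⟨A, hA, hAμ⟩, hub⟩ := hMMS'
  have hd01 : Disjoint (A 0) (A 1) := hA.2.1 0 1 (by decide)
  have hcov : ∀ j : Fin (m + 2), j ∈ A 0 ∨ j ∈ A 1 := by
    intro j
    rcases hA.2.2 j (mem_univ j) with ⟨k, hk⟩
    fin_cases k
    · exact Or.inl hk
    · exact Or.inr hk
  have hunion : A 0 ∪ A 1 = univ :=
    Finset.eq_univ_of_forall fun j => Finset.mem_union.mpr (hcov j)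
  have hsum2 : (∑ j ∈ A 0, MMSAux.v m e j) + ∑ j ∈ A 1, MMSAux.v m e j = 1 / 2 := by
    rw [← Finset.sum_union hd01, hunion, MMSAux.total]
  have hμ14 : μ ≤ 1 / 4 := by linarith [hAμ 0, hAμ 1]
  -- 0 ≤ μ from the trivial partition
  have hμ0 : 0 ≤ μ := by
    obtain ⟨k, hk⟩ := hub (fun k => if k = 0 then univ else ∅)
      ⟨fun k => Finset.subset_univ _,
       fun k l hkl => by fin_cases k <;> fin_cases l <;> simp_all,
       fun j _ => ⟨0, by simp⟩⟩
    have hklt := k.isLt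
    rcases (by omega : (k : ℕ) = 0 ∨ (k : ℕ) = 1) with h | h
    · have hk0 : k = 0 := Fin.ext h
      subst hk0
      rw [if_pos rfl, MMSAux.total] at hk
      linarith
    · have hk1 : k = 1 := Fin.ext h
      subst hk1
      rw [if_neg (by decide), Finset.sum_empty] at hk
      exact hk
  -- a partition solution forces μ = 1/4
  have hquarter : (∃ S : Finset (Fin m), 2 * ∑ i ∈ S, e i = ∑ i, e i) → μ = 1 / 4 := by
    rintro ⟨S, hS⟩
    set P : Fin 2 → Finset (Fin (m + 2)) := fun k =>
      if k = 0 then S.image (MMSAux.fg m) ∪ {MMSAux.c0 m}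
      else Sᶜ.image (MMSAux.fg m) ∪ {MMSAux.c1 m} with hPdef
    have hdP : Disjoint (P 0) (P 1) := by
      rw [Finset.disjoint_left]
      intro j hj hj'
      simp only [hPdef, if_pos rfl, if_neg (by decide : (1 : Fin 2) ≠ 0)] at hj hj'
      rcases Finset.mem_union.mp hj with hj | hj
      · obtain ⟨a, haS, rfl⟩ := Finset.mem_image.mp hj
        rcases Finset.mem_union.mp hj' with hj' | hj'
        · obtain ⟨b, hbS, hba⟩ := Finset.mem_image.mp hj'
          cases MMSAux.fg_inj m hba
          exact (Finset.mem_compl.mp hbS) haS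
        · exact MMSAux.fg_ne_c1 m a (Finset.mem_singleton.mp hj')
      · rw [Finset.mem_singleton] at hj; subst hj
        rcases Finset.mem_union.mp hj' with hj' | hj'
        · obtain ⟨a, _, ha⟩ := Finset.mem_image.mp hj'
          exact MMSAux.fg_ne_c0 m a ha
        · exact MMSAux.c0_ne_c1 m (Finset.mem_singleton.mp hj')
    have hP : IsPartition (univ : Finset (Fin (m + 2))) 2 P := by
      refine ⟨fun k => Finset.subset_univ _, ?_, ?_⟩
      · intro k l hkl
        fin_cases k <;> fin_cases l
        · exact absurd rfl hkl
        · exact hdP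
        · exact hdP.symm
        · exact absurd rfl hkl
      · intro j _
        by_cases hj : (j : ℕ) < m
        · have hfg : MMSAux.fg m ⟨j, hj⟩ = j := Fin.ext rfl
          by_cases hS' : (⟨j, hj⟩ : Fin m) ∈ S
          · exact ⟨0, by
              simp only [hPdef, if_pos rfl]
              exact Finset.mem_union_left _ (Finset.mem_image.mpr ⟨_, hS', hfg⟩)⟩
          · exact ⟨1, by
              simp only [hPdef, if_neg (by decide : (1 : Fin 2) ≠ 0)]
              exact Finset.mem_union_left _
                (Finset.mem_image.mpr ⟨_, Finset.mem_compl.mpr hS', hfg⟩)⟩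
        · have hlt := j.isLt
          rcases (by omega : (j : ℕ) = m ∨ (j : ℕ) = m + 1) with h | h
          · exact ⟨0, by
              simp only [hPdef, if_pos rfl]
              exact Finset.mem_union_right _
                (Finset.mem_singleton.mpr (Fin.ext h))⟩
          · exact ⟨1, by
              simp only [hPdef, if_neg (by decide : (1 : Fin 2) ≠ 0)]
              exact Finset.mem_union_right _
                (Finset.mem_singleton.mpr (Fin.ext h))⟩
    -- compute the two bundle values
    have hfilter0 : univ.filter (fun i : Fin m => MMSAux.fg m i ∈ P 0) = S := by
      ext i
      simp only [mem_filter, mem_univ, true_and, hPdef, if_pos rfl]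
      constructor
      · intro hi
        rcases Finset.mem_union.mp hi with hi | hi
        · obtain ⟨b, hbS, hb⟩ := Finset.mem_image.mp hi
          cases MMSAux.fg_inj m hb; exact hbS
        · exact absurd (Finset.mem_singleton.mp hi) (MMSAux.fg_ne_c0 m i)
      · intro hi
        exact Finset.mem_union_left _ (Finset.mem_image_of_mem _ hi)
    have hfilter1 : univ.filter (fun i : Fin m => MMSAux.fg m i ∈ P 1) = Sᶜ := by
      ext i
      simp only [mem_filter, mem_univ, true_and, hPdef,
        if_neg (by decide : (1 : Fin 2) ≠ 0)]
      constructor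
      · intro hi
        rcases Finset.mem_union.mp hi with hi | hi
        · obtain ⟨b, hbS, hb⟩ := Finset.mem_image.mp hi
          cases MMSAux.fg_inj m hb; exact hbS
        · exact absurd (Finset.mem_singleton.mp hi) (MMSAux.fg_ne_c1 m i)
      · intro hi
        exact Finset.mem_union_left _ (Finset.mem_image_of_mem _ hi)
    have hc0P0 : MMSAux.c0 m ∈ P 0 := by
      simp only [hPdef, if_pos rfl]
      exact Finset.mem_union_right _ (Finset.mem_singleton_self _)
    have hc1P1 : MMSAux.c1 m ∈ P 1 := by
      simp only [hPdef, if_neg (by decide : (1 : Fin 2) ≠ 0)]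
      exact Finset.mem_union_right _ (Finset.mem_singleton_self _)
    have hc1P0 : MMSAux.c1 m ∉ P 0 := Finset.disjoint_right.mp hdP hc1P1
    have hc0P1 : MMSAux.c0 m ∉ P 1 := Finset.disjoint_left.mp hdP hc0P0
    have hcastS : (∑ i ∈ S, (e i : ℝ)) = ((∑ i, e i : ℕ) : ℝ) / 2 := by
      have h' : ((2 * ∑ i ∈ S, e i : ℕ) : ℝ) = ((∑ i, e i : ℕ) : ℝ) := by
        exact_mod_cast congrArg (fun n : ℕ => (n : ℝ)) hS
      push_cast at h' ⊢
      linarith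
    have hcastSc : (∑ i ∈ Sᶜ, (e i : ℝ)) = ((∑ i, e i : ℕ) : ℝ) / 2 := by
      have h2 : (∑ i ∈ S, (e i : ℝ)) + ∑ i ∈ Sᶜ, (e i : ℝ) = ∑ i, (e i : ℝ) :=
        Finset.sum_add_sum_compl S _
      have h3 : (∑ i, (e i : ℝ)) = ((∑ i, e i : ℕ) : ℝ) := by push_cast; rfl
      rw [h3, hcastS] at h2
      linarith
    have hsumP0 : ∑ j ∈ P 0, MMSAux.v m e j = 1 / 4 := by
      rw [MMSAux.decomp, hfilter0, if_pos hc0P0, if_neg hc1P0, hcastS]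
      ring
    have hsumP1 : ∑ j ∈ P 1, MMSAux.v m e j = 1 / 4 := by
      rw [MMSAux.decomp, hfilter1, if_neg hc0P1, if_pos hc1P1, hcastSc]
      ring
    obtain ⟨k, hk⟩ := hub P hP
    have h14 : (1 : ℝ) / 4 ≤ μ := by
      fin_cases k
      · rw [show P ⟨0, by omega⟩ = P 0 from rfl, hsumP0] at hk; exact hk
      · rw [show P ⟨1, by omega⟩ = P 1 from rfl, hsumP1] at hk; exact hk
    linarith
  -- forward direction: 0 < μ → partition solution
  have hfwd : 0 < μ → ∃ S : Finset (Fin m), 2 * ∑ i ∈ S, e i = ∑ i, e i := by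
    intro hμ
    set S0 : Finset (Fin m) := univ.filter (fun i => MMSAux.fg m i ∈ A 0) with hS0def
    set S1 : Finset (Fin m) := univ.filter (fun i => MMSAux.fg m i ∈ A 1) with hS1def
    have hS01 : ∑ i ∈ S0, e i + ∑ i ∈ S1, e i = ∑ i, e i := by
      have hdisj : Disjoint S0 S1 := by
        rw [Finset.disjoint_left]
        intro i hi hi'
        exact (Finset.disjoint_left.mp hd01) (mem_filter.mp hi).2 (mem_filter.mp hi').2
      have huni : S0 ∪ S1 = univ := Finset.eq_univ_of_forall fun i => by
        rcases hcov (MMSAux.fg m i) with h | h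
        · exact Finset.mem_union_left _ (mem_filter.mpr ⟨mem_univ i, h⟩)
        · exact Finset.mem_union_right _ (mem_filter.mpr ⟨mem_univ i, h⟩)
      rw [← Finset.sum_union hdisj, huni]
    have hv0 := MMSAux.decomp m e (A 0)
    have hv1 := MMSAux.decomp m e (A 1)
    have hcast0 : (∑ i ∈ S0, (e i : ℝ)) = ((∑ i ∈ S0, e i : ℕ) : ℝ) := by push_cast; rfl
    have hcast1 : (∑ i ∈ S1, (e i : ℝ)) = ((∑ i ∈ S1, e i : ℕ) : ℝ) := by push_cast; rfl
    rw [← hS0def, hcast0] at hv0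
    rw [← hS1def, hcast1] at hv1
    have h0 := hAμ 0
    have h1 := hAμ 1
    rw [hv0] at h0
    rw [hv1] at h1
    have hmem1 : ∀ j, j ∈ A 1 ↔ j ∉ A 0 := fun j =>
      ⟨fun h h0' => (Finset.disjoint_left.mp hd01) h0' h,
       fun h => (hcov j).resolve_left h⟩
    obtain ⟨d, hd2⟩ := heven
    have hEcast : ((∑ i, e i : ℕ) : ℝ) = 2 * (d : ℝ) := by exact_mod_cast hd2
    by_cases hc0 : MMSAux.c0 m ∈ A 0 <;> by_cases hc1 : MMSAux.c1 m ∈ A 0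
    · -- both chores in A 0 : contradiction
      exfalso
      rw [if_pos hc0, if_pos hc1] at h0
      rw [if_neg (fun h => (hmem1 _).mp h hc0), if_neg (fun h => (hmem1 _).mp h hc1),
        add_zero, add_zero] at h1
      have hb : 0 < ∑ i ∈ S1, e i := by
        by_contra hb
        push_neg at hb
        have hz : ∑ i ∈ S1, e i = 0 := Nat.le_zero.mp hb
        rw [hz] at h1
        norm_num at h1
        linarith
      have ha : ∑ i ∈ S0, e i + 1 ≤ ∑ i, e i := by omega
      have ha' : ((∑ i ∈ S0, e i : ℕ) : ℝ) + 1 ≤ ((∑ i, e i : ℕ) : ℝ) := by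
        exact_mod_cast ha
      linarith
    · -- c0 ∈ A 0, c1 ∈ A 1 : solution S0
      rw [if_pos hc0, if_neg hc1] at h0
      rw [if_neg (fun h => (hmem1 _).mp h hc0), if_pos ((hmem1 _).mpr hc1)] at h1
      have ha : (d : ℕ) ≤ ∑ i ∈ S0, e i := by
        by_contra ha
        push_neg at ha
        have ha' : ((∑ i ∈ S0, e i : ℕ) : ℝ) + 1 ≤ (d : ℝ) := by exact_mod_cast ha
        rw [hEcast] at h0
        linarith
      have hb : (d : ℕ) ≤ ∑ i ∈ S1, e i := by
        by_contra hb
        push_neg at hb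
        have hb' : ((∑ i ∈ S1, e i : ℕ) : ℝ) + 1 ≤ (d : ℝ) := by exact_mod_cast hb
        rw [hEcast] at h1
        linarith
      exact ⟨S0, by omega⟩
    · -- c0 ∈ A 1, c1 ∈ A 0 : solution S0
      rw [if_neg hc0, if_pos hc1] at h0
      rw [if_pos ((hmem1 _).mpr hc0), if_neg (fun h => (hmem1 _).mp h hc1)] at h1
      have ha : (d : ℕ) ≤ ∑ i ∈ S0, e i := by
        by_contra ha
        push_neg at ha
        have ha' : ((∑ i ∈ S0, e i : ℕ) : ℝ) + 1 ≤ (d : ℝ) := by exact_mod_cast ha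
        rw [hEcast] at h0
        linarith
      have hb : (d : ℕ) ≤ ∑ i ∈ S1, e i := by
        by_contra hb
        push_neg at hb
        have hb' : ((∑ i ∈ S1, e i : ℕ) : ℝ) + 1 ≤ (d : ℝ) := by exact_mod_cast hb
        rw [hEcast] at h1
        linarith
      exact ⟨S0, by omega⟩
    · -- both chores in A 1 : contradiction
      exfalso
      rw [if_neg hc0, if_neg hc1] at h0
      rw [if_pos ((hmem1 _).mpr hc0), if_pos ((hmem1 _).mpr hc1)] at h1
      have ha : 0 < ∑ i ∈ S0, e i := by
        by_contra ha
        push_neg at ha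
        have hz : ∑ i ∈ S0, e i = 0 := Nat.le_zero.mp ha
        rw [hz] at h0
        norm_num at h0
        linarith
      have hb : ∑ i ∈ S1, e i + 1 ≤ ∑ i, e i := by omega
      have hb' : ((∑ i ∈ S1, e i : ℕ) : ℝ) + 1 ≤ ((∑ i, e i : ℕ) : ℝ) := by
        exact_mod_cast hb
      linarith
  exact ⟨hμ0, hμ14, ⟨hfwd, fun h => by rw [hquarter h]; norm_num⟩, hquarter⟩
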